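/- For every N ≥ 1, the partial sum of reciprocals S_N = Σ_{j=1}^{N} 1/x_j equals the finite continued fraction [a_0; a_1, a_2, …, a_{2N−2}], i.e., S_N = p_{2N−2}/q_{2N−2}. -/

import Mathlib

/-- for every `N ≥ 1`, the partial sum `S_N = ∑_{j=1}^N 1 / x j` equals the
finite continued fraction `[a 0; a 1, …, a (2N-2)]`, i.e. `S_N = p_{2N-2} / q_{2N-2}`.
Here `p`, `q` are indexed with a shift, so that `p (m+1) / q (m+1)` is the `m`-th
convergent, with `p 0 = p_{-1} = 1` and `q 0 = q_{-1} = 0`. -/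
theorem stmt_4 (F : Polynomial ℤ)
    (hFnonneg : ∀ i, 0 ≤ F.coeff i) (hF0 : F.coeff 0 = 1) (hFdeg : 1 ≤ F.natDegree)
    (x : ℕ → ℚ) (hxpos : ∀ n, 0 < x n) (hx0 : x 0 = 1) (hx1 : x 1 = 1)
    (hrec : ∀ n, x (n + 2) * x n = (x (n + 1)) ^ 2 * Polynomial.aeval (x (n + 1)) F)
    (a : ℕ → ℚ)
    (haeven : ∀ n, a (2 * n) = x n)
    (haodd : ∀ n, a (2 * n + 1) = (Polynomial.aeval (x (n + 1)) F - 1) / x n)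
    (p q : ℕ → ℚ)
    (hp0 : p 0 = 1) (hp1 : p 1 = a 0) (hq0 : q 0 = 0) (hq1 : q 1 = 1)
    (hp : ∀ n, p (n + 2) = a (n + 1) * p (n + 1) + p n)
    (hq : ∀ n, q (n + 2) = a (n + 1) * q (n + 1) + q n) :
    ∀ N : ℕ, 1 ≤ N →
      ∑ j ∈ Finset.Icc 1 N, 1 / x j = p (2 * N - 1) / q (2 * N - 1) := by
  have hxne : ∀ n, x n ≠ 0 := fun n => (hxpos n).ne'
  -- closed forms for x (n+2) in terms of x (n+1), x n
  have hxstep : ∀ n, x (n + 2) = x (n + 1) ^ 2 * Polynomial.aeval (x (n + 1)) F / x n := by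
    intro n
    rw [eq_div_iff (hxne n)]
    exact hrec n
  have key : ∀ M : ℕ,
      p (2 * M + 1) = x (M + 1) * ∑ j ∈ Finset.Icc 1 (M + 1), 1 / x j ∧
      q (2 * M + 1) = x (M + 1) ∧
      p (2 * M + 2) = (x (M + 2) / x (M + 1) - 1) * (∑ j ∈ Finset.Icc 1 (M + 1), 1 / x j)
          + 1 / x (M + 1) ∧
      q (2 * M + 2) = x (M + 2) / x (M + 1) - 1 := by
    intro M
    induction M with
    | zero =>
      have hs : ∑ j ∈ Finset.Icc 1 1, 1 / x j = 1 / x 1 := by simp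
      have ha0 : a 0 = x 0 := haeven 0
      have ha1 : a 1 = (Polynomial.aeval (x 1) F - 1) / x 0 := haodd 0
      have hx2 : x 2 = Polynomial.aeval (x 1) F := by
        have h := hrec 0
        rw [hx0, mul_one] at h
        rw [h, hx1, one_pow, one_mul]
      refine ⟨?_, ?_, ?_, ?_⟩
      · rw [hp1, ha0, hx0, hx1, hs, hx1]; norm_num
      · rw [hq1, hx1]
      · have h2 : p 2 = a 1 * p 1 + p 0 := hp 0
        rw [h2, ha1, hp1, ha0, hp0, hx0, hx1, hs, hx1, hx2, hx1]
        ring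
      · have h2 : q 2 = a 1 * q 1 + q 0 := hq 0
        rw [h2, ha1, hq1, hq0, hx0, hx1, hx2, hx1]
        ring
    | succ M ih =>
      obtain ⟨hP, hQ, hT, hR⟩ := ih
      simp only [show 2 * (M + 1) + 1 = 2 * M + 3 from by ring,
        show 2 * (M + 1) + 2 = 2 * M + 4 from by ring,
        show M + 1 + 2 = M + 3 from by ring,
        show M + 1 + 1 = M + 2 from by ring]
      have ha2 : a (2 * M + 2) = x (M + 1) := by
        have h := haeven (M + 1)
        rwa [show 2 * (M + 1) = 2 * M + 2 by ring] at h
      have ha3 : a (2 * M + 3) = (Polynomial.aeval (x (M + 2)) F - 1) / x (M + 1) := by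
        have h := haodd (M + 1)
        rwa [show 2 * (M + 1) + 1 = 2 * M + 3 by ring, show M + 1 + 1 = M + 2 by ring] at h
      have hsum : ∑ j ∈ Finset.Icc 1 (M + 2), 1 / x j
          = (∑ j ∈ Finset.Icc 1 (M + 1), 1 / x j) + 1 / x (M + 2) := by
        rw [← Finset.sum_Icc_succ_top (by omega : 1 ≤ M + 2)]
      have hp3 : p (2 * M + 3) = a (2 * M + 2) * p (2 * M + 2) + p (2 * M + 1) := hp (2 * M + 1)
      have hq3 : q (2 * M + 3) = a (2 * M + 2) * q (2 * M + 2) + q (2 * M + 1) := hq (2 * M + 1)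
      have hp4 : p (2 * M + 4) = a (2 * M + 3) * p (2 * M + 3) + p (2 * M + 2) := hp (2 * M + 2)
      have hq4 : q (2 * M + 4) = a (2 * M + 3) * q (2 * M + 3) + q (2 * M + 2) := hq (2 * M + 2)
      have hx3 : x (M + 3) = x (M + 2) ^ 2 * Polynomial.aeval (x (M + 2)) F / x (M + 1) := by
        have h := hxstep (M + 1)
        rwa [show M + 1 + 2 = M + 3 by ring, show M + 1 + 1 = M + 2 by ring] at h
      have hgP : p (2 * M + 3) = x (M + 2) * ∑ j ∈ Finset.Icc 1 (M + 2), 1 / x j := by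
        rw [hp3, ha2, hT, hP, hsum]
        field_simp [hxne (M + 1), hxne (M + 2)]
        ring
      have hgQ : q (2 * M + 3) = x (M + 2) := by
        rw [hq3, ha2, hR, hQ]
        field_simp [hxne (M + 1)]
        ring
      refine ⟨?_, ?_, ?_, ?_⟩
      · exact hgP
      · exact hgQ
      · rw [hp4, ha3, hgP, hT, hsum, hx3]
        field_simp [hxne (M + 1), hxne (M + 2)]
        ring
      · rw [hq4, ha3, hgQ, hR, hx3]
        field_simp [hxne (M + 1), hxne (M + 2)]
        ring
  intro N hN
  obtain ⟨M, rfl⟩ : ∃ M, N = M + 1 := ⟨N - 1, by omega⟩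
  obtain ⟨hP, hQ, -, -⟩ := key M
  have hidx : 2 * (M + 1) - 1 = 2 * M + 1 := by omega
  rw [hidx, hP, hQ, mul_comm, mul_div_assoc, div_self (hxne (M + 1)), mul_one]
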